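/- Let V be a simple Z2-graded comodule over a Z2-graded coalgebra C over an algebraically closed field. Then the commutant of V (the graded endomorphism algebra of V as a comodule) is either one- or two-dimensional: its even part consists of the scalar multiples of the identity, and its odd part is either zero or spanned by an odd comodule endomorphism J with J² = −id; moreover the odd part is nonzero if and only if V is reducible as a comodule in the nongraded sense. -/

import Mathlib

open TensorProduct

namespace SuperCoalg

variable (k : Type) [Field k]
variable (C : Type) [AddCommGroup C] [Module k C] [Coalgebra k C]

/-- `β : V →ₗ[k] V ⊗[k] C` is a (right) comodule structure map over the coalgebra `C`. -/
structure IsComodule {V : Type} [AddCommGroup V] [Module k V]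
    (β : V →ₗ[k] V ⊗[k] C) : Prop where
  coassoc : (TensorProduct.assoc k V C C).toLinearMap ∘ₗ β.rTensor C ∘ₗ β
      = LinearMap.lTensor V (Coalgebra.comul (R := k) (A := C)) ∘ₗ β
  counit_id : (TensorProduct.rid k V).toLinearMap ∘ₗ
      LinearMap.lTensor V (Coalgebra.counit (R := k) (A := C)) ∘ₗ β = LinearMap.id

/-- A bundled right `C`-comodule. -/
structure Comod where
  V : Type
  [addCommGroup : AddCommGroup V]
  [module : Module k V]
  β : V →ₗ[k] V ⊗[k] C
  isComodule : IsComodule k C β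

attribute [instance] Comod.addCommGroup Comod.module

variable {k C}

/-- A submodule `W ≤ V` is a subcomodule for the structure map `β`. -/
def IsSubcomodule {V : Type} [AddCommGroup V] [Module k V]
    (β : V →ₗ[k] V ⊗[k] C) (W : Submodule k V) : Prop :=
  ∀ w ∈ W, β w ∈ LinearMap.range (W.subtype.rTensor C)

/-- `f` is a homomorphism of right `C`-comodules from `(V, β)` to `(W, γ)`. -/
def IsComodHom {V W : Type} [AddCommGroup V] [Module k V] [AddCommGroup W] [Module k W]
    (β : V →ₗ[k] V ⊗[k] C) (γ : W →ₗ[k] W ⊗[k] C) (f : V →ₗ[k] W) : Prop :=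
  f.rTensor C ∘ₗ β = γ ∘ₗ f

/-- A subcomodule is simple if it is nonzero and has no nonzero proper subcomodules. -/
def IsSimpleSubcomodule {V : Type} [AddCommGroup V] [Module k V]
    (β : V →ₗ[k] V ⊗[k] C) (W : Submodule k V) : Prop :=
  IsSubcomodule β W ∧ W ≠ ⊥ ∧
    ∀ U : Submodule k V, U ≤ W → IsSubcomodule β U → U = ⊥ ∨ U = W

/-- The socle of the comodule `(V, β)`: the sum of all its simple subcomodules. -/
def socle {V : Type} [AddCommGroup V] [Module k V]
    (β : V →ₗ[k] V ⊗[k] C) : Submodule k V :=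
  sSup {W : Submodule k V | IsSimpleSubcomodule β W}

/-- A comodule is simple if it is nonzero and has no nonzero proper subcomodules. -/
def IsSimpleComod (M : Comod k C) : Prop :=
  Nontrivial M.V ∧ ∀ W : Submodule k M.V, IsSubcomodule M.β W → W = ⊥ ∨ W = ⊤

/-- A comodule is indecomposable if it is nonzero and is not the direct sum of two
nonzero subcomodules. -/
def IsIndecomposableComod (M : Comod k C) : Prop :=
  Nontrivial M.V ∧ ∀ W W' : Submodule k M.V,
    IsSubcomodule M.β W → IsSubcomodule M.β W' → IsCompl W W' → W = ⊥ ∨ W' = ⊥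

/-- A comodule is injective if it splits off every comodule containing it as a
subcomodule. -/
def IsInjectiveComod (M : Comod k C) : Prop :=
  ∀ (W : Comod k C) (g : M.V →ₗ[k] W.V),
    IsComodHom M.β W.β g → Function.Injective g →
      ∃ X' : Submodule k W.V, IsSubcomodule W.β X' ∧ IsCompl (LinearMap.range g) X'

/-- `N` is an injective cover of the simple comodule `S`: `N` is indecomposable,
injective, and its socle is a copy of `S`. -/
def IsInjectiveCover (N S : Comod k C) : Prop :=
  IsIndecomposableComod N ∧ IsInjectiveComod N ∧
    ∃ g : S.V →ₗ[k] N.V, IsComodHom S.β N.β g ∧ Function.Injective g ∧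
      LinearMap.range g = socle N.β

/-- The coefficient map `φ_V : V* ⊗ V → C` of a comodule `(V, β)`, given by right linear
extension of forms, `φ_V (ω ⊗ v) = (ω ⊗ id) (β v)`. -/
noncomputable def coeffMap {V : Type} [AddCommGroup V] [Module k V]
    (β : V →ₗ[k] V ⊗[k] C) : (Module.Dual k V) ⊗[k] V →ₗ[k] C :=
  (TensorProduct.lid k C).toLinearMap ∘ₗ
    (contractLeft k V).rTensor C ∘ₗ
    (TensorProduct.assoc k (Module.Dual k V) V C).symm.toLinearMap ∘ₗ
    LinearMap.lTensor (Module.Dual k V) β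

/-- `(C₀, C₁)` is a `Z₂`-grading of the coalgebra `C`: the comultiplication and the
counit are homogeneous of degree zero. -/
structure IsGradedCoalgebra (C₀ C₁ : Submodule k C) : Prop where
  compl : IsCompl C₀ C₁
  comul_even : ∀ x ∈ C₀, Coalgebra.comul (R := k) x ∈
    LinearMap.range (TensorProduct.mapIncl C₀ C₀) ⊔
      LinearMap.range (TensorProduct.mapIncl C₁ C₁)
  comul_odd : ∀ x ∈ C₁, Coalgebra.comul (R := k) x ∈
    LinearMap.range (TensorProduct.mapIncl C₀ C₁) ⊔
      LinearMap.range (TensorProduct.mapIncl C₁ C₀)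
  counit_odd : ∀ x ∈ C₁, Coalgebra.counit (R := k) x = 0

/-- `(V₀, V₁)` is a `Z₂`-grading of the comodule `(V, β)` (over the graded coalgebra
`C = C₀ ⊕ C₁`) for which the structure map is homogeneous of degree zero. -/
structure IsGradedComodule (C₀ C₁ : Submodule k C) {V : Type} [AddCommGroup V]
    [Module k V] (β : V →ₗ[k] V ⊗[k] C) (V₀ V₁ : Submodule k V) : Prop where
  compl : IsCompl V₀ V₁
  even : ∀ v ∈ V₀, β v ∈
    LinearMap.range (TensorProduct.mapIncl V₀ C₀) ⊔
      LinearMap.range (TensorProduct.mapIncl V₁ C₁)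
  odd : ∀ v ∈ V₁, β v ∈
    LinearMap.range (TensorProduct.mapIncl V₀ C₁) ⊔
      LinearMap.range (TensorProduct.mapIncl V₁ C₀)

/-- A submodule is graded (w.r.t. the grading `(V₀, V₁)`) if it is the sum of its
homogeneous parts. -/
def IsGradedSubmodule {V : Type} [AddCommGroup V] [Module k V]
    (V₀ V₁ W : Submodule k V) : Prop :=
  W = (W ⊓ V₀) ⊔ (W ⊓ V₁)

/-- A graded subcomodule is (graded) simple if it is nonzero and has no nonzero proper
graded subcomodules. -/
def IsGradedSimpleSub {V : Type} [AddCommGroup V] [Module k V]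
    (β : V →ₗ[k] V ⊗[k] C) (V₀ V₁ : Submodule k V) (W : Submodule k V) : Prop :=
  IsSubcomodule β W ∧ IsGradedSubmodule V₀ V₁ W ∧ W ≠ ⊥ ∧
    ∀ U : Submodule k V, U ≤ W → IsSubcomodule β U → IsGradedSubmodule V₀ V₁ U →
      U = ⊥ ∨ U = W


section Infra
set_option linter.unusedSectionVars false
variable {V : Type} [AddCommGroup V] [Module k V] {ι : Type}

noncomputable def coordE (b : Module.Basis ι k C) : V ⊗[k] C ≃ₗ[k] (ι →₀ V) :=
  letI := Classical.decEq ι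
  (TensorProduct.congr (LinearEquiv.refl k V) b.repr).trans (TensorProduct.finsuppScalarRight k k V ι)

lemma coordE_tmul (b : Module.Basis ι k C) (v : V) (c : C) (j : ι) :
    coordE b (v ⊗ₜ[k] c) j = b.repr c j • v := by
  simp [coordE]

lemma coordE_symm_single (b : Module.Basis ι k C) (j : ι) (v : V) :
    (coordE b).symm (Finsupp.single j v) = v ⊗ₜ[k] b j := by
  apply (coordE b).injective
  rw [LinearEquiv.apply_symm_apply]
  ext i
  classical
  rw [coordE_tmul, Module.Basis.repr_self, Finsupp.single_apply, Finsupp.single_apply]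
  split <;> simp [*]

lemma coordE_sum (b : Module.Basis ι k C) (t : V ⊗[k] C) :
    t = (coordE b t).sum fun j v => v ⊗ₜ[k] b j := by
  conv_lhs => rw [← (coordE b).symm_apply_apply t]
  generalize coordE b t = g
  conv_lhs => rw [← Finsupp.sum_single g]
  rw [map_finsuppSum]
  exact Finsupp.sum_congr fun j _ => coordE_symm_single b j (g j)

lemma coordE_apply_add (b : Module.Basis ι k C) (x y : V ⊗[k] C) (j : ι) :
    coordE b (x + y) j = coordE b x j + coordE b y j := by
  rw [map_add]; rfl

lemma mem_rTensor_range_iff (b : Module.Basis ι k C) (W : Submodule k V) (t : V ⊗[k] C) :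
    t ∈ LinearMap.range (W.subtype.rTensor C) ↔ ∀ j, coordE b t j ∈ W := by
  constructor
  · rintro ⟨u, rfl⟩ j
    induction u using TensorProduct.induction_on with
    | zero => simp
    | tmul w c => rw [LinearMap.rTensor_tmul, coordE_tmul]; exact W.smul_mem _ w.2
    | add x y hx hy => rw [map_add, coordE_apply_add]; exact W.add_mem hx hy
  · intro h
    rw [coordE_sum b t]
    refine Submodule.finsuppSum_mem _ _ _ _ fun j _ => ⟨(⟨_, h j⟩ : W) ⊗ₜ[k] b j, rfl⟩

lemma coordE_rTensor (b : Module.Basis ι k C) (f : V →ₗ[k] V) (t : V ⊗[k] C) (j : ι) :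
    coordE b (f.rTensor C t) j = f (coordE b t j) := by
  induction t using TensorProduct.induction_on with
  | zero => simp
  | tmul v c => rw [LinearMap.rTensor_tmul, coordE_tmul, coordE_tmul, map_smul]
  | add x y hx hy => rw [map_add, coordE_apply_add, coordE_apply_add, map_add, hx, hy]

noncomputable def abasis {C₀ C₁ : Submodule k C} (hc : IsCompl C₀ C₁) :
    Module.Basis ((Module.Basis.ofVectorSpaceIndex k C₀) ⊕ (Module.Basis.ofVectorSpaceIndex k C₁)) k C :=
  ((Module.Basis.ofVectorSpace k C₀).prod (Module.Basis.ofVectorSpace k C₁)).map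
    (Submodule.prodEquivOfIsCompl C₀ C₁ hc)

lemma abasis_inl_mem {C₀ C₁ : Submodule k C} (hc : IsCompl C₀ C₁) (i) :
    abasis hc (Sum.inl i) ∈ C₀ := by
  rw [abasis, Module.Basis.map_apply, Module.Basis.prod_apply]; simp

lemma abasis_inr_mem {C₀ C₁ : Submodule k C} (hc : IsCompl C₀ C₁) (i) :
    abasis hc (Sum.inr i) ∈ C₁ := by
  rw [abasis, Module.Basis.map_apply, Module.Basis.prod_apply]; simp

lemma abasis_repr_inr_eq_zero {C₀ C₁ : Submodule k C} (hc : IsCompl C₀ C₁) {c : C}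
    (h : c ∈ C₀) (i) : (abasis hc).repr c (Sum.inr i) = 0 := by
  rw [abasis, Module.Basis.map_repr]
  have : (Submodule.prodEquivOfIsCompl C₀ C₁ hc).symm c = ((⟨c, h⟩ : C₀), (0 : C₁)) := by
    rw [LinearEquiv.symm_apply_eq]; simp
  simp [this]

lemma abasis_repr_inl_eq_zero {C₀ C₁ : Submodule k C} (hc : IsCompl C₀ C₁) {c : C}
    (h : c ∈ C₁) (i) : (abasis hc).repr c (Sum.inl i) = 0 := by
  rw [abasis, Module.Basis.map_repr]
  have : (Submodule.prodEquivOfIsCompl C₀ C₁ hc).symm c = ((0 : C₀), (⟨c, h⟩ : C₁)) := by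
    rw [LinearEquiv.symm_apply_eq]; simp
  simp [this]

lemma mapIncl_left_coords {C₀ C₁ : Submodule k C} (hc : IsCompl C₀ C₁)
    (A₀ : Submodule k V) (u : A₀ ⊗[k] C₀) :
    (∀ i, coordE (abasis hc) (TensorProduct.mapIncl A₀ C₀ u) (Sum.inl i) ∈ A₀) ∧
    (∀ i, coordE (abasis hc) (TensorProduct.mapIncl A₀ C₀ u) (Sum.inr i) = 0) := by
  induction u using TensorProduct.induction_on with
  | zero => simp
  | tmul a c =>
      constructor <;> intro i <;> rw [mapIncl, TensorProduct.map_tmul, coordE_tmul] <;>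
        simp only [Submodule.subtype_apply]
      · exact A₀.smul_mem _ a.2
      · rw [abasis_repr_inr_eq_zero hc c.2, zero_smul]
  | add s r hs hr =>
      constructor <;> intro i <;> rw [map_add, coordE_apply_add]
      · exact A₀.add_mem (hs.1 i) (hr.1 i)
      · rw [hs.2 i, hr.2 i, add_zero]

lemma mapIncl_right_coords {C₀ C₁ : Submodule k C} (hc : IsCompl C₀ C₁)
    (A₁ : Submodule k V) (u : A₁ ⊗[k] C₁) :
    (∀ i, coordE (abasis hc) (TensorProduct.mapIncl A₁ C₁ u) (Sum.inl i) = 0) ∧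
    (∀ i, coordE (abasis hc) (TensorProduct.mapIncl A₁ C₁ u) (Sum.inr i) ∈ A₁) := by
  induction u using TensorProduct.induction_on with
  | zero => simp
  | tmul a c =>
      constructor <;> intro i <;> rw [mapIncl, TensorProduct.map_tmul, coordE_tmul] <;>
        simp only [Submodule.subtype_apply]
      · rw [abasis_repr_inl_eq_zero hc c.2, zero_smul]
      · exact A₁.smul_mem _ a.2
  | add s r hs hr =>
      constructor <;> intro i <;> rw [map_add, coordE_apply_add]
      · rw [hs.1 i, hr.1 i, add_zero]
      · exact A₁.add_mem (hs.2 i) (hr.2 i)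

lemma mem_sup_mapIncl_iff {C₀ C₁ : Submodule k C} (hc : IsCompl C₀ C₁)
    (A₀ A₁ : Submodule k V) (t : V ⊗[k] C) :
    t ∈ LinearMap.range (TensorProduct.mapIncl A₀ C₀) ⊔
        LinearMap.range (TensorProduct.mapIncl A₁ C₁) ↔
      (∀ i, coordE (abasis hc) t (Sum.inl i) ∈ A₀) ∧
      (∀ i, coordE (abasis hc) t (Sum.inr i) ∈ A₁) := by
  constructor
  · intro ht
    obtain ⟨x, hx, y, hy, rfl⟩ := Submodule.mem_sup.1 ht
    obtain ⟨u, rfl⟩ := hx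
    obtain ⟨w, rfl⟩ := hy
    obtain ⟨hul, hur⟩ := mapIncl_left_coords hc A₀ u
    obtain ⟨hwl, hwr⟩ := mapIncl_right_coords hc A₁ w
    constructor
    · intro i; rw [coordE_apply_add, hwl i, add_zero]; exact hul i
    · intro i; rw [coordE_apply_add, hur i, zero_add]; exact hwr i
  · rintro ⟨h0, h1⟩
    rw [coordE_sum (abasis hc) t]
    refine Submodule.finsuppSum_mem _ _ _ _ fun j _ => ?_
    match j with
    | Sum.inl i =>
        refine Submodule.mem_sup_left ⟨(⟨_, h0 i⟩ : A₀) ⊗ₜ[k] (⟨_, abasis_inl_mem hc i⟩ : C₀), ?_⟩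
        rw [mapIncl, TensorProduct.map_tmul]; rfl
    | Sum.inr i =>
        refine Submodule.mem_sup_right ⟨(⟨_, h1 i⟩ : A₁) ⊗ₜ[k] (⟨_, abasis_inr_mem hc i⟩ : C₁), ?_⟩
        rw [mapIncl, TensorProduct.map_tmul]; rfl

lemma subcomodule_iff_coords (b : Module.Basis ι k C) (β : V →ₗ[k] V ⊗[k] C) (W : Submodule k V) :
    IsSubcomodule β W ↔ ∀ w ∈ W, ∀ j, coordE b (β w) j ∈ W :=
  forall₂_congr fun w _ => mem_rTensor_range_iff b W (β w)

lemma exists_fd_subcomodule (b : Module.Basis ι k C) {β : V →ₗ[k] V ⊗[k] C}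
    (hβ : IsComodule k C β) (v : V) :
    ∃ W : Submodule k V, FiniteDimensional k W ∧ IsSubcomodule β W ∧ v ∈ W := by
  classical
  set g : ι →₀ V := coordE b (β v) with hg
  set W : Submodule k V := Submodule.span k ↑(g.support.image g) with hW
  have hgen : ∀ j, g j ∈ W := by
    intro j
    by_cases hj : j ∈ g.support
    · exact Submodule.subset_span (Finset.mem_coe.2 (Finset.mem_image_of_mem g hj))
    · rw [Finsupp.notMem_support_iff.1 hj]; exact W.zero_mem
  have hβv : β v = g.sum fun j vj => vj ⊗ₜ[k] b j := coordE_sum b (β v)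
  refine ⟨W, FiniteDimensional.span_of_finite k (Finset.finite_toSet _), ?_, ?_⟩
  · -- W is a subcomodule
    have key : ∀ m, β (g m) ∈ LinearMap.range (W.subtype.rTensor C) := by
      intro m
      set φ : C →ₗ[k] k := b.coord m with hφ
      set Φ : V ⊗[k] (C ⊗[k] C) →ₗ[k] V ⊗[k] C :=
        LinearMap.lTensor V ((TensorProduct.rid k C).toLinearMap ∘ₗ LinearMap.lTensor C φ)
        with hΦ
      set Ψ : (V ⊗[k] C) ⊗[k] C →ₗ[k] V ⊗[k] C :=
        (TensorProduct.rid k (V ⊗[k] C)).toLinearMap ∘ₗ LinearMap.lTensor (V ⊗[k] C) φ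
        with hΨ
      have hΨ_apply : ∀ (x : V ⊗[k] C) (c' : C), Ψ (x ⊗ₜ[k] c') = φ c' • x := by
        intro x c'
        rw [hΨ, LinearMap.comp_apply, LinearMap.lTensor_tmul]
        simp
      have hΦΨ : ∀ u : (V ⊗[k] C) ⊗[k] C,
          Φ ((TensorProduct.assoc k V C C) u) = Ψ u := by
        intro u
        induction u using TensorProduct.induction_on with
        | zero => simp
        | add x y hx hy => rw [map_add, map_add, map_add, hx, hy]
        | tmul x c' =>
            rw [hΨ_apply]
            induction x using TensorProduct.induction_on with
            | zero => simp
            | add x y hx hy =>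
                rw [add_tmul, map_add, map_add, hx, hy, smul_add]
            | tmul w c =>
                rw [TensorProduct.assoc_tmul, hΦ, LinearMap.lTensor_tmul]
                simp [TensorProduct.tmul_smul]
      have hco : (TensorProduct.assoc k V C C) ((LinearMap.rTensor C β) (β v))
          = LinearMap.lTensor V (Coalgebra.comul (R := k) (A := C)) (β v) := by
        have := congrArg (fun (F : V →ₗ[k] V ⊗[k] (C ⊗[k] C)) => F v) hβ.coassoc
        simpa using this
      have h1 : Ψ ((LinearMap.rTensor C β) (β v)) = β (g m) := by
        conv_lhs => rw [hβv]
        rw [map_finsuppSum, map_finsuppSum]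
        have : ∀ j vj, Ψ ((LinearMap.rTensor C β) (vj ⊗ₜ[k] b j))
            = if j = m then β vj else 0 := by
          intro j vj
          rw [LinearMap.rTensor_tmul, hΨ_apply, hφ, Module.Basis.coord_apply, Module.Basis.repr_self,
            Finsupp.single_apply]
          split <;> simp
        rw [Finsupp.sum_congr (g2 := fun j vj => if j = m then β vj else 0)
          fun j _ => this j (g j)]
        rw [Finsupp.sum_ite_eq' g m fun j vj => β vj]
        split
        · rfl
        · rw [Finsupp.notMem_support_iff.1 (by assumption), map_zero]
      have h2 : Φ (LinearMap.lTensor V (Coalgebra.comul (R := k) (A := C)) (β v))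
          ∈ LinearMap.range (W.subtype.rTensor C) := by
        rw [hΦ, ← LinearMap.comp_apply, ← LinearMap.lTensor_comp, hβv, map_finsuppSum]
        refine Submodule.finsuppSum_mem _ _ _ _ fun j _ => ?_
        rw [LinearMap.lTensor_tmul]
        exact ⟨(⟨g j, hgen j⟩ : W) ⊗ₜ[k] _, rfl⟩
      rw [← h1, ← hΦΨ, hco]
      exact h2
    intro w hw
    refine Submodule.span_induction ?_ ?_ ?_ ?_ hw
    · rintro x hx
      obtain ⟨j, _, rfl⟩ := Finset.mem_image.1 (Finset.mem_coe.1 hx)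
      exact key j
    · rw [map_zero]; exact Submodule.zero_mem _
    · intro x y _ _ hx hy; rw [map_add]; exact Submodule.add_mem _ hx hy
    · intro a x _ hx; rw [map_smul]; exact Submodule.smul_mem _ a hx
  · -- v ∈ W
    have hcu := congrArg (fun (F : V →ₗ[k] V) => F v) hβ.counit_id
    simp only [LinearMap.comp_apply, LinearMap.id_apply] at hcu
    rw [← hcu, hβv, map_finsuppSum, map_finsuppSum]
    refine Submodule.finsuppSum_mem _ _ _ _ fun j _ => ?_
    rw [LinearMap.lTensor_tmul]
    simpa using W.smul_mem _ (hgen j)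

section GradedInfra

variable {V₀ V₁ : Submodule k V}

/-- Projection onto `V₀` along `V₁`, as an endomorphism of `V`. -/
noncomputable def prj (hv : IsCompl V₀ V₁) : V →ₗ[k] V :=
  V₀.subtype ∘ₗ V₀.projectionOnto V₁ hv

lemma prj_mem (hv : IsCompl V₀ V₁) (v : V) : prj hv v ∈ V₀ := (V₀.projectionOnto V₁ hv v).2

lemma prj_eq_self (hv : IsCompl V₀ V₁) {v : V} (h : v ∈ V₀) : prj hv v = v := by
  have : prj hv (⟨v, h⟩ : V₀) = v := by
    rw [prj, LinearMap.comp_apply, Submodule.projectionOnto_apply_left hv]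
    rfl
  exact this

lemma prj_eq_zero (hv : IsCompl V₀ V₁) {v : V} (h : v ∈ V₁) : prj hv v = 0 := by
  rw [prj, LinearMap.comp_apply, Submodule.projectionOnto_apply_of_mem_right hv h, map_zero]

lemma prj_add_prj (hv : IsCompl V₀ V₁) (v : V) : prj hv v + prj hv.symm v = v :=
  Submodule.projection_add_projection_eq_self hv v

lemma prj_add_eq (hv : IsCompl V₀ V₁) {a b : V} (ha : a ∈ V₀) (hb : b ∈ V₁) :
    prj hv (a + b) = a := by
  rw [map_add, prj_eq_self hv ha, prj_eq_zero hv hb, add_zero]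

lemma eq_zero_of_add_eq_zero (hv : IsCompl V₀ V₁) {a b : V} (ha : a ∈ V₀) (hb : b ∈ V₁)
    (h : a + b = 0) : a = 0 ∧ b = 0 := by
  have h1 : a = 0 := by rw [← prj_add_eq hv ha hb, h, map_zero]
  exact ⟨h1, by rw [← h, h1, zero_add]⟩

variable {C₀ C₁ : Submodule k C} {β : V →ₗ[k] V ⊗[k] C}

/-- The grading of `β` expressed in coordinates w.r.t. an adapted basis of `C`. -/
lemma coord_beta_prj (hc : IsCompl C₀ C₁) (hgr : IsGradedComodule C₀ C₁ β V₀ V₁) (v : V) :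
    (∀ i, coordE (abasis hc) (β (prj hgr.compl v)) (Sum.inl i)
        = prj hgr.compl (coordE (abasis hc) (β v) (Sum.inl i))) ∧
    (∀ i, coordE (abasis hc) (β (prj hgr.compl v)) (Sum.inr i)
        = prj hgr.compl.symm (coordE (abasis hc) (β v) (Sum.inr i))) ∧
    (∀ i, coordE (abasis hc) (β (prj hgr.compl.symm v)) (Sum.inl i)
        = prj hgr.compl.symm (coordE (abasis hc) (β v) (Sum.inl i))) ∧
    (∀ i, coordE (abasis hc) (β (prj hgr.compl.symm v)) (Sum.inr i)
        = prj hgr.compl (coordE (abasis hc) (β v) (Sum.inr i))) := by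
  have hv := hgr.compl
  have heven := (mem_sup_mapIncl_iff hc V₀ V₁ (β (prj hv v))).1
    (hgr.even _ (prj_mem hv v))
  have hodd' := hgr.odd _ (prj_mem hv.symm v)
  rw [sup_comm] at hodd'
  have hodd := (mem_sup_mapIncl_iff hc V₁ V₀ (β (prj hv.symm v))).1 hodd'
  have hsplit : ∀ j, coordE (abasis hc) (β v) j
      = coordE (abasis hc) (β (prj hv v)) j + coordE (abasis hc) (β (prj hv.symm v)) j := by
    intro j
    conv_lhs => rw [← prj_add_prj hv v]
    rw [map_add, map_add]
    rfl
  refine ⟨fun i => ?_, fun i => ?_, fun i => ?_, fun i => ?_⟩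
  · rw [hsplit (Sum.inl i), prj_add_eq hv (heven.1 i) (hodd.1 i)]
  · rw [hsplit (Sum.inr i), prj_add_eq hv.symm (heven.2 i) (hodd.2 i)]
  · rw [hsplit (Sum.inl i), add_comm, prj_add_eq hv.symm (hodd.1 i) (heven.1 i)]
  · rw [hsplit (Sum.inr i), add_comm, prj_add_eq hv (hodd.2 i) (heven.2 i)]

lemma isGradedSubmodule_sup {A B : Submodule k V} (hA : A ≤ V₀) (hB : B ≤ V₁) :
    IsGradedSubmodule V₀ V₁ (A ⊔ B) := by
  refine le_antisymm (sup_le ?_ ?_) (sup_le inf_le_left inf_le_left)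
  · exact le_trans (le_inf le_sup_left hA) le_sup_left
  · exact le_trans (le_inf le_sup_right hB) le_sup_right

lemma isSubcomodule_of_parts {A B U : Submodule k V} (hU : U = A ⊔ B)
    (hA : ∀ a ∈ A, β a ∈ LinearMap.range (U.subtype.rTensor C))
    (hB : ∀ b ∈ B, β b ∈ LinearMap.range (U.subtype.rTensor C)) :
    IsSubcomodule β U := by
  intro w hw
  rw [hU] at hw
  obtain ⟨a, ha, b, hb, rfl⟩ := Submodule.mem_sup.1 hw
  rw [map_add]
  exact Submodule.add_mem _ (hA a ha) (hB b hb)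

/-- The graded closure of a subcomodule is a subcomodule. -/
lemma graded_closure_subcomodule (hc : IsCompl C₀ C₁) (hgr : IsGradedComodule C₀ C₁ β V₀ V₁)
    {W : Submodule k V} (hW : IsSubcomodule β W) :
    IsSubcomodule β (W.map (prj hgr.compl) ⊔ W.map (prj hgr.compl.symm)) := by
  have hv := hgr.compl
  have hcw : ∀ w ∈ W, ∀ j, coordE (abasis hc) (β w) j ∈ W :=
    (subcomodule_iff_coords (abasis hc) β W).1 hW
  refine isSubcomodule_of_parts rfl ?_ ?_
  · rintro _ ⟨w, hw, rfl⟩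
    rw [mem_rTensor_range_iff (abasis hc)]
    rintro (i | i)
    · rw [(coord_beta_prj hc hgr w).1 i]
      exact Submodule.mem_sup_left ⟨_, hcw w hw _, rfl⟩
    · rw [(coord_beta_prj hc hgr w).2.1 i]
      exact Submodule.mem_sup_right ⟨_, hcw w hw _, rfl⟩
  · rintro _ ⟨w, hw, rfl⟩
    rw [mem_rTensor_range_iff (abasis hc)]
    rintro (i | i)
    · rw [(coord_beta_prj hc hgr w).2.2.1 i]
      exact Submodule.mem_sup_right ⟨_, hcw w hw _, rfl⟩
    · rw [(coord_beta_prj hc hgr w).2.2.2 i]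
      exact Submodule.mem_sup_left ⟨_, hcw w hw _, rfl⟩

/-- The graded part of a subcomodule is a subcomodule. -/
lemma graded_part_subcomodule (hc : IsCompl C₀ C₁) (hgr : IsGradedComodule C₀ C₁ β V₀ V₁)
    {W : Submodule k V} (hW : IsSubcomodule β W) :
    IsSubcomodule β ((W ⊓ V₀) ⊔ (W ⊓ V₁)) := by
  have hv := hgr.compl
  have hcw : ∀ w ∈ W, ∀ j, coordE (abasis hc) (β w) j ∈ W :=
    (subcomodule_iff_coords (abasis hc) β W).1 hW
  refine isSubcomodule_of_parts rfl ?_ ?_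
  · intro w hw
    rw [mem_rTensor_range_iff (abasis hc)]
    have heven := (mem_sup_mapIncl_iff hc V₀ V₁ (β w)).1 (hgr.even w hw.2)
    rintro (i | i)
    · exact Submodule.mem_sup_left ⟨hcw w hw.1 _, heven.1 i⟩
    · exact Submodule.mem_sup_right ⟨hcw w hw.1 _, heven.2 i⟩
  · intro w hw
    rw [mem_rTensor_range_iff (abasis hc)]
    have hodd' := hgr.odd w hw.2
    rw [sup_comm] at hodd'
    have hodd := (mem_sup_mapIncl_iff hc V₁ V₀ (β w)).1 hodd'
    rintro (i | i)
    · exact Submodule.mem_sup_right ⟨hcw w hw.1 _, hodd.1 i⟩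
    · exact Submodule.mem_sup_left ⟨hcw w hw.1 _, hodd.2 i⟩

/-- The kernel of a comodule endomorphism is a subcomodule. -/
lemma ker_subcomodule {f : V →ₗ[k] V} (hf : IsComodHom β β f) :
    IsSubcomodule β (LinearMap.ker f) := by
  intro w hw
  rw [mem_rTensor_range_iff (Module.Basis.ofVectorSpace k C)]
  intro j
  rw [LinearMap.mem_ker]
  rw [← coordE_rTensor (Module.Basis.ofVectorSpace k C) f (β w) j]
  have : (f.rTensor C) (β w) = β (f w) := by
    have := congrArg (fun (F : V →ₗ[k] V ⊗[k] C) => F w) hf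
    simpa using this
  rw [this, LinearMap.mem_ker.1 hw, map_zero]
  simp

lemma isComodHom_id : IsComodHom β β (LinearMap.id) := by
  unfold IsComodHom
  rw [LinearMap.rTensor_id]
  ext v
  simp

lemma isComodHom_smul {f : V →ₗ[k] V} (hf : IsComodHom β β f) (c : k) :
    IsComodHom β β (c • f) := by
  unfold IsComodHom at *
  rw [LinearMap.rTensor_smul, LinearMap.smul_comp, LinearMap.comp_smul, hf]

lemma isComodHom_sub {f g : V →ₗ[k] V} (hf : IsComodHom β β f) (hg : IsComodHom β β g) :
    IsComodHom β β (f - g) := by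
  unfold IsComodHom at *
  rw [LinearMap.rTensor_sub, LinearMap.sub_comp, LinearMap.comp_sub, hf, hg]

lemma isComodHom_comp {f g : V →ₗ[k] V} (hf : IsComodHom β β f) (hg : IsComodHom β β g) :
    IsComodHom β β (f ∘ₗ g) := by
  unfold IsComodHom at *
  rw [LinearMap.rTensor_comp, LinearMap.comp_assoc, hg, ← LinearMap.comp_assoc, hf,
    LinearMap.comp_assoc]

section Simple

variable {C₀ C₁ : Submodule k C} {β : V →ₗ[k] V ⊗[k] C} {V₀ V₁ : Submodule k V}

lemma map_prj_le (hv : IsCompl V₀ V₁) (W : Submodule k V) : W.map (prj hv) ≤ V₀ := by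
  rintro _ ⟨w, _, rfl⟩
  exact prj_mem hv w

lemma mem_graded_closure (hv : IsCompl V₀ V₁) {W : Submodule k V} {v : V} (hvW : v ∈ W) :
    v ∈ W.map (prj hv) ⊔ W.map (prj hv.symm) := by
  rw [← prj_add_prj hv v]
  exact Submodule.add_mem_sup ⟨v, hvW, rfl⟩ ⟨v, hvW, rfl⟩

lemma nontrivial_of_simple (hsimple : IsGradedSimpleSub β V₀ V₁ (⊤ : Submodule k V)) :
    Nontrivial V := by
  obtain ⟨v, -, hv0⟩ := Submodule.ne_bot_iff _ |>.1 hsimple.2.2.1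
  exact ⟨v, 0, hv0⟩

lemma finiteDimensional_of_simple (hc : IsCompl C₀ C₁) (hβ : IsComodule k C β)
    (hgr : IsGradedComodule C₀ C₁ β V₀ V₁)
    (hsimple : IsGradedSimpleSub β V₀ V₁ (⊤ : Submodule k V)) :
    FiniteDimensional k V := by
  have hv := hgr.compl
  obtain ⟨v, -, hv0⟩ := Submodule.ne_bot_iff _ |>.1 hsimple.2.2.1
  obtain ⟨W, hWfd, hWsub, hvW⟩ := exists_fd_subcomodule (abasis hc) hβ v
  set U := W.map (prj hv) ⊔ W.map (prj hv.symm) with hU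
  have hUsub := graded_closure_subcomodule hc hgr hWsub
  have hUgr : IsGradedSubmodule V₀ V₁ U :=
    isGradedSubmodule_sup (map_prj_le hv W) (map_prj_le hv.symm W)
  have hUtop : U = ⊤ := by
    rcases hsimple.2.2.2 U le_top hUsub hUgr with h | h
    · have hvU : v ∈ U := mem_graded_closure hv hvW
      rw [h] at hvU
      exact absurd ((Submodule.mem_bot k).1 hvU) hv0
    · exact h
  haveI : FiniteDimensional k W := hWfd
  haveI : FiniteDimensional k U := by
    rw [hU]
    infer_instance
  rw [hUtop] at this
  exact Submodule.topEquiv.finiteDimensional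

lemma ker_graded {f : V →ₗ[k] V} (hv : IsCompl V₀ V₁) {A B : Submodule k V}
    (hAB : IsCompl A B) (h0 : Submodule.map f V₀ ≤ A) (h1 : Submodule.map f V₁ ≤ B) :
    IsGradedSubmodule V₀ V₁ (LinearMap.ker f) := by
  refine le_antisymm ?_ (sup_le inf_le_left inf_le_left)
  intro w hw
  have hdecomp := prj_add_prj hv w
  have hsum : f (prj hv w) + f (prj hv.symm w) = 0 := by
    rw [← map_add, hdecomp, LinearMap.mem_ker.1 hw]
  obtain ⟨ha, hb⟩ := eq_zero_of_add_eq_zero hAB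
    (h0 ⟨_, prj_mem hv w, rfl⟩) (h1 ⟨_, prj_mem hv.symm w, rfl⟩) hsum
  have h0k : prj hv w ∈ LinearMap.ker f ⊓ V₀ := ⟨LinearMap.mem_ker.2 ha, prj_mem hv w⟩
  have h1k : prj hv.symm w ∈ LinearMap.ker f ⊓ V₁ := ⟨LinearMap.mem_ker.2 hb, prj_mem hv.symm w⟩
  rw [← hdecomp]
  exact Submodule.add_mem_sup h0k h1k

lemma even_scalar [IsAlgClosed k] [FiniteDimensional k V] [Nontrivial V]
    (hc : IsCompl C₀ C₁) (hgr : IsGradedComodule C₀ C₁ β V₀ V₁)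
    (hsimple : IsGradedSimpleSub β V₀ V₁ (⊤ : Submodule k V))
    {f : V →ₗ[k] V} (hf : IsComodHom β β f)
    (h0 : Submodule.map f V₀ ≤ V₀) (h1 : Submodule.map f V₁ ≤ V₁) :
    ∃ c : k, f = c • LinearMap.id := by
  have hv := hgr.compl
  obtain ⟨c, hcev⟩ := Module.End.exists_eigenvalue (f : Module.End k V)
  refine ⟨c, ?_⟩
  set g : V →ₗ[k] V := f - c • LinearMap.id with hgdef
  have hker : LinearMap.ker g ≠ ⊥ := by
    have := hcev
    rw [Module.End.hasEigenvalue_iff, Module.End.eigenspace_def] at this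
    simpa [hgdef, Module.End.one_eq_id] using this
  have hghom : IsComodHom β β g := isComodHom_sub hf (isComodHom_smul isComodHom_id c)
  have hgsub : IsSubcomodule β (LinearMap.ker g) := ker_subcomodule hghom
  have hggr : IsGradedSubmodule V₀ V₁ (LinearMap.ker g) := by
    refine ker_graded hv hv ?_ ?_
    · rintro _ ⟨w, hw, rfl⟩
      exact Submodule.sub_mem _ (h0 ⟨w, hw, rfl⟩) (V₀.smul_mem c hw)
    · rintro _ ⟨w, hw, rfl⟩
      exact Submodule.sub_mem _ (h1 ⟨w, hw, rfl⟩) (V₁.smul_mem c hw)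
  rcases hsimple.2.2.2 _ le_top hgsub hggr with h | h
  · exact absurd h hker
  · have : g = 0 := LinearMap.ker_eq_top.1 h
    rw [sub_eq_zero] at this
    exact this

lemma odd_eq_zero_of_scalar [Nontrivial V] (hv : IsCompl V₀ V₁) {f : V →ₗ[k] V}
    (h01 : Submodule.map f V₀ ≤ V₁) (h10 : Submodule.map f V₁ ≤ V₀)
    {c : k} (h : f = c • LinearMap.id) : f = 0 := by
  by_cases hc0 : c = 0
  · rw [h, hc0, zero_smul]
  · exfalso
    have hV0 : V₀ = ⊥ := by
      rw [Submodule.eq_bot_iff]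
      intro v hvmem
      have h1 : f v ∈ V₁ := h01 ⟨v, hvmem, rfl⟩
      have h2 : f v = c • v := by rw [h]; rfl
      have h3 : c • v ∈ V₀ := V₀.smul_mem c hvmem
      have h4 : c • v = 0 := (Submodule.disjoint_def.1 hv.disjoint) _ h3 (h2 ▸ h1)
      rcases smul_eq_zero.1 h4 with h | h
      · exact absurd h hc0
      · exact h
    have hV1 : V₁ = ⊥ := by
      rw [Submodule.eq_bot_iff]
      intro v hvmem
      have h1 : f v ∈ V₀ := h10 ⟨v, hvmem, rfl⟩
      have h2 : f v = c • v := by rw [h]; rfl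
      have h3 : c • v ∈ V₁ := V₁.smul_mem c hvmem
      have h4 : c • v = 0 := (Submodule.disjoint_def.1 hv.disjoint) _ (h2 ▸ h1) h3
      rcases smul_eq_zero.1 h4 with h | h
      · exact absurd h hc0
      · exact h
    have htb : (⊤ : Submodule k V) = ⊥ := by
      rw [← hv.codisjoint.eq_top, hV0, hV1, sup_idem]
    obtain ⟨x, y, hxy⟩ := exists_pair_ne V
    apply hxy
    have hx : x - y ∈ (⊥ : Submodule k V) := htb ▸ Submodule.mem_top
    rw [Submodule.mem_bot, sub_eq_zero] at hx
    exact hx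

lemma odd_sq_scalar [IsAlgClosed k] [FiniteDimensional k V] [Nontrivial V]
    (hc : IsCompl C₀ C₁) (hgr : IsGradedComodule C₀ C₁ β V₀ V₁)
    (hsimple : IsGradedSimpleSub β V₀ V₁ (⊤ : Submodule k V))
    {f : V →ₗ[k] V} (hf : IsComodHom β β f)
    (h01 : Submodule.map f V₀ ≤ V₁) (h10 : Submodule.map f V₁ ≤ V₀) (hf0 : f ≠ 0) :
    ∃ c : k, c ≠ 0 ∧ f ∘ₗ f = c • LinearMap.id := by
  have hv := hgr.compl
  have hsq0 : Submodule.map (f ∘ₗ f) V₀ ≤ V₀ := by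
    rw [Submodule.map_comp]
    exact le_trans (Submodule.map_mono h01) h10
  have hsq1 : Submodule.map (f ∘ₗ f) V₁ ≤ V₁ := by
    rw [Submodule.map_comp]
    exact le_trans (Submodule.map_mono h10) h01
  obtain ⟨c, hcsq⟩ := even_scalar hc hgr hsimple (isComodHom_comp hf hf) hsq0 hsq1
  refine ⟨c, ?_, hcsq⟩
  rintro rfl
  rw [zero_smul] at hcsq
  -- then ker f is a nonzero proper graded subcomodule
  have hker_bot : LinearMap.ker f ≠ ⊥ := by
    intro hbot
    have hrange : LinearMap.range f ≤ LinearMap.ker f := by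
      rintro _ ⟨v, rfl⟩
      rw [LinearMap.mem_ker, ← LinearMap.comp_apply, hcsq, LinearMap.zero_apply]
    rw [hbot, le_bot_iff, LinearMap.range_eq_bot] at hrange
    exact hf0 hrange
  have hker_top : LinearMap.ker f ≠ ⊤ := fun h => hf0 (LinearMap.ker_eq_top.1 h)
  have hsub : IsSubcomodule β (LinearMap.ker f) := ker_subcomodule hf
  have hgrk : IsGradedSubmodule V₀ V₁ (LinearMap.ker f) := ker_graded hv hv.symm h01 h10
  rcases hsimple.2.2.2 _ le_top hsub hgrk with h | h
  · exact hker_bot h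
  · exact hker_top h

lemma prj_eq_zero_iff (hv : IsCompl V₀ V₁) {x : V} : prj hv x = 0 ↔ x ∈ V₁ := by
  constructor
  · intro h
    have : V₀.projectionOnto V₁ hv x = 0 := by
      apply Subtype.ext
      simpa [prj] using h
    exact (Submodule.projectionOnto_apply_eq_zero_iff hv).1 this
  · exact prj_eq_zero hv

lemma exists_odd_of_reducible [Nontrivial V] (hc : IsCompl C₀ C₁) (hβ : IsComodule k C β)
    (hgr : IsGradedComodule C₀ C₁ β V₀ V₁)
    (hsimple : IsGradedSimpleSub β V₀ V₁ (⊤ : Submodule k V))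
    {W : Submodule k V} (hW : IsSubcomodule β W) (hWbot : W ≠ ⊥) (hWtop : W ≠ ⊤) :
    ∃ f : V →ₗ[k] V, IsComodHom β β f ∧ Submodule.map f V₀ ≤ V₁ ∧
      Submodule.map f V₁ ≤ V₀ ∧ f ≠ 0 := by
  classical
  have hv := hgr.compl
  have hcw : ∀ w ∈ W, ∀ j, coordE (abasis hc) (β w) j ∈ W :=
    (subcomodule_iff_coords (abasis hc) β W).1 hW
  -- Step 1: W ⊓ V₀ = ⊥ and W ⊓ V₁ = ⊥
  have hpart : (W ⊓ V₀) ⊔ (W ⊓ V₁) = ⊥ := by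
    rcases hsimple.2.2.2 _ le_top (graded_part_subcomodule hc hgr hW)
      (isGradedSubmodule_sup inf_le_right inf_le_right) with h | h
    · exact h
    · exact absurd (eq_top_iff.2 (h ▸ sup_le inf_le_left inf_le_left : _ ≤ W)) hWtop
  have hWV0 : W ⊓ V₁ = ⊥ := by
    have := sup_eq_bot_iff.1 hpart
    exact this.2
  have hWV0' : W ⊓ V₀ = ⊥ := (sup_eq_bot_iff.1 hpart).1
  -- Step 2: the graded closure of W is everything
  have hclos : W.map (prj hv) ⊔ W.map (prj hv.symm) = ⊤ := by
    rcases hsimple.2.2.2 _ le_top (graded_closure_subcomodule hc hgr hW)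
      (isGradedSubmodule_sup (map_prj_le hv W) (map_prj_le hv.symm W)) with h | h
    · exfalso
      apply hWbot
      rw [Submodule.eq_bot_iff]
      intro w hw
      have := mem_graded_closure hv hw
      rw [h, Submodule.mem_bot] at this
      exact this
    · exact h
  -- Step 3: the projections map W onto V₀ and V₁
  have hm0 : W.map (prj hv) = V₀ := by
    refine le_antisymm (map_prj_le hv W) ?_
    intro v hv0
    have hvt : v ∈ W.map (prj hv) ⊔ W.map (prj hv.symm) := by rw [hclos]; exact trivial
    obtain ⟨a, ha, b, hb, hab⟩ := Submodule.mem_sup.1 hvt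
    have hbV : b ∈ V₁ := map_prj_le hv.symm W hb
    have haV : a ∈ V₀ := map_prj_le hv W ha
    have hbv : b = v - a := by rw [← hab]; abel
    have hb0 : b = 0 := (Submodule.disjoint_def.1 hv.symm.disjoint) b hbV
      (hbv ▸ Submodule.sub_mem _ hv0 haV)
    rw [hb0, add_zero] at hab
    exact hab ▸ ha
  have hm1 : W.map (prj hv.symm) = V₁ := by
    refine le_antisymm (map_prj_le hv.symm W) ?_
    intro v hv1
    have hvt : v ∈ W.map (prj hv) ⊔ W.map (prj hv.symm) := by rw [hclos]; exact trivial
    obtain ⟨a, ha, b, hb, hab⟩ := Submodule.mem_sup.1 hvt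
    have hbV : b ∈ V₁ := map_prj_le hv.symm W hb
    have haV : a ∈ V₀ := map_prj_le hv W ha
    have hav : a = v - b := by rw [← hab]; abel
    have ha0 : a = 0 := (Submodule.disjoint_def.1 hv.disjoint) a haV
      (hav ▸ Submodule.sub_mem _ hv1 hbV)
    rw [ha0, zero_add] at hab
    exact hab ▸ hb
  -- Step 4: linear equivalences W ≃ V₀ and W ≃ V₁
  set φ0 : W →ₗ[k] V₀ :=
    LinearMap.codRestrict V₀ (prj hv ∘ₗ W.subtype) (fun w => prj_mem hv _) with hφ0
  set φ1 : W →ₗ[k] V₁ :=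
    LinearMap.codRestrict V₁ (prj hv.symm ∘ₗ W.subtype) (fun w => prj_mem hv.symm _) with hφ1
  have hφ0coe : ∀ w : W, (φ0 w : V) = prj hv w := fun w => rfl
  have hφ1coe : ∀ w : W, (φ1 w : V) = prj hv.symm w := fun w => rfl
  have hφ0bij : Function.Bijective φ0 := by
    constructor
    · intro x y hxy
      have h1 : prj hv ((x : V) - y) = 0 := by
        rw [map_sub, ← hφ0coe, ← hφ0coe, hxy, sub_self]
      have h2 : (x : V) - y ∈ W ⊓ V₁ :=
        ⟨Submodule.sub_mem _ x.2 y.2, (prj_eq_zero_iff hv).1 h1⟩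
      rw [hWV0, Submodule.mem_bot, sub_eq_zero] at h2
      exact Subtype.ext h2
    · intro y
      have : (y : V) ∈ W.map (prj hv) := by rw [hm0]; exact y.2
      obtain ⟨w, hw, hwy⟩ := this
      exact ⟨⟨w, hw⟩, Subtype.ext hwy⟩
  have hφ1bij : Function.Bijective φ1 := by
    constructor
    · intro x y hxy
      have h1 : prj hv.symm ((x : V) - y) = 0 := by
        rw [map_sub, ← hφ1coe, ← hφ1coe, hxy, sub_self]
      have h2 : (x : V) - y ∈ W ⊓ V₀ :=
        ⟨Submodule.sub_mem _ x.2 y.2, (prj_eq_zero_iff hv.symm).1 h1⟩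
      rw [hWV0', Submodule.mem_bot, sub_eq_zero] at h2
      exact Subtype.ext h2
    · intro y
      have : (y : V) ∈ W.map (prj hv.symm) := by rw [hm1]; exact y.2
      obtain ⟨w, hw, hwy⟩ := this
      exact ⟨⟨w, hw⟩, Subtype.ext hwy⟩
  set e0 : W ≃ₗ[k] V₀ := LinearEquiv.ofBijective φ0 hφ0bij with he0
  set e1 : W ≃ₗ[k] V₁ := LinearEquiv.ofBijective φ1 hφ1bij with he1
  set π0 : V →ₗ[k] V₀ := V₀.projectionOnto V₁ hv with hπ0
  set π1 : V →ₗ[k] V₁ := V₁.projectionOnto V₀ hv.symm with hπ1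
  set J : V →ₗ[k] V :=
    V₁.subtype ∘ₗ (e1.toLinearMap ∘ₗ e0.symm.toLinearMap) ∘ₗ π0
      + V₀.subtype ∘ₗ (e0.toLinearMap ∘ₗ e1.symm.toLinearMap) ∘ₗ π1 with hJ
  -- evaluation of J
  have hJ_apply : ∀ v : V,
      J v = (e1 (e0.symm (π0 v)) : V) + (e0 (e1.symm (π1 v)) : V) := by
    intro v
    rw [hJ]
    rfl
  have hJ_even : ∀ v ∈ V₀, J v = (e1 (e0.symm (π0 v)) : V) := by
    intro v hv0
    rw [hJ_apply v, hπ1, Submodule.projectionOnto_apply_of_mem_right hv.symm hv0]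
    simp
  have hJ_odd : ∀ v ∈ V₁, J v = (e0 (e1.symm (π1 v)) : V) := by
    intro v hv1
    rw [hJ_apply v, hπ0, Submodule.projectionOnto_apply_of_mem_right hv hv1]
    simp
  have hJ_p0 : ∀ x ∈ W, J (prj hv x) = prj hv.symm x := by
    intro x hx
    have hπ : π0 (prj hv x) = π0 x := by
      have hx0 : prj hv x = ((π0 x : V₀) : V) := rfl
      rw [hx0, Submodule.projectionOnto_apply_left hv]
    have he : e0.symm (π0 x) = ⟨x, hx⟩ := by
      rw [LinearEquiv.symm_apply_eq]
      rfl
    rw [hJ_even _ (prj_mem hv x), hπ, he]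
    rfl
  have hJ_p1 : ∀ x ∈ W, J (prj hv.symm x) = prj hv x := by
    intro x hx
    have hπ : π1 (prj hv.symm x) = π1 x := by
      have hx1 : prj hv.symm x = ((π1 x : V₁) : V) := rfl
      rw [hx1, Submodule.projectionOnto_apply_left hv.symm]
    have he : e1.symm (π1 x) = ⟨x, hx⟩ := by
      rw [LinearEquiv.symm_apply_eq]
      rfl
    rw [hJ_odd _ (prj_mem hv.symm x), hπ, he]
    rfl
  -- J is odd
  have hJ01 : Submodule.map J V₀ ≤ V₁ := by
    rintro _ ⟨v, hv0, rfl⟩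
    rw [hJ_even v hv0]
    exact (e1 (e0.symm (π0 v))).2
  have hJ10 : Submodule.map J V₁ ≤ V₀ := by
    rintro _ ⟨v, hv1, rfl⟩
    rw [hJ_odd v hv1]
    exact (e0 (e1.symm (π1 v))).2
  -- J is nonzero
  have hJne : J ≠ 0 := by
    intro h0
    obtain ⟨w, hwmem, hwne⟩ := (Submodule.ne_bot_iff W).1 hWbot
    apply hwne
    have h1 : prj hv.symm w = 0 := by rw [← hJ_p0 w hwmem, h0]; rfl
    have h2 : prj hv w = 0 := by rw [← hJ_p1 w hwmem, h0]; rfl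
    rw [← prj_add_prj hv w, h1, h2, add_zero]
  -- J is a comodule homomorphism
  have hJhom : IsComodHom β β J := by
    set D : V →ₗ[k] V ⊗[k] C := J.rTensor C ∘ₗ β - β ∘ₗ J with hD
    have hDtop : (⊤ : Submodule k V) ≤ LinearMap.ker D := by
      rw [← hclos]
      have key0 : ∀ x ∈ W, D (prj hv x) = 0 := by
        intro x hx
        rw [hD, LinearMap.sub_apply, sub_eq_zero, LinearMap.comp_apply, LinearMap.comp_apply,
          hJ_p0 x hx]
        apply (coordE (abasis hc)).injective
        ext j
        rw [coordE_rTensor]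
        match j with
        | Sum.inl i =>
            rw [(coord_beta_prj hc hgr x).1 i, (coord_beta_prj hc hgr x).2.2.1 i]
            exact hJ_p0 _ (hcw x hx _)
        | Sum.inr i =>
            rw [(coord_beta_prj hc hgr x).2.1 i, (coord_beta_prj hc hgr x).2.2.2 i]
            exact hJ_p1 _ (hcw x hx _)
      have key1 : ∀ x ∈ W, D (prj hv.symm x) = 0 := by
        intro x hx
        rw [hD, LinearMap.sub_apply, sub_eq_zero, LinearMap.comp_apply, LinearMap.comp_apply,
          hJ_p1 x hx]
        apply (coordE (abasis hc)).injective
        ext j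
        rw [coordE_rTensor]
        match j with
        | Sum.inl i =>
            rw [(coord_beta_prj hc hgr x).2.2.1 i, (coord_beta_prj hc hgr x).1 i]
            exact hJ_p1 _ (hcw x hx _)
        | Sum.inr i =>
            rw [(coord_beta_prj hc hgr x).2.2.2 i, (coord_beta_prj hc hgr x).2.1 i]
            exact hJ_p0 _ (hcw x hx _)
      refine sup_le ?_ ?_
      · rintro _ ⟨x, hx, rfl⟩
        exact LinearMap.mem_ker.2 (key0 x hx)
      · rintro _ ⟨x, hx, rfl⟩
        exact LinearMap.mem_ker.2 (key1 x hx)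
    have hD0 : D = 0 := LinearMap.ker_eq_top.1 (eq_top_iff.2 hDtop)
    rw [hD] at hD0
    rw [sub_eq_zero] at hD0
    exact hD0
  exact ⟨J, hJhom, hJ01, hJ10, hJne⟩

end Simple

end GradedInfra

end Infra

/-- Schur's lemma for graded simple comodules over a `Z₂`-graded coalgebra over an
algebraically closed field: the commutant of a graded simple comodule `V` is one- or
two-dimensional.  Its even part consists of the scalar multiples of the identity; its
odd part is either zero or spanned by an odd endomorphism `J` with `J² = -id`; and the
odd part is nonzero if and only if `V` is reducible as a comodule in the nongraded
sense. -/
theorem graded_schur_commutant [IsAlgClosed k]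
    (C₀ C₁ : Submodule k C) (hC : IsGradedCoalgebra C₀ C₁)
    {V : Type} [AddCommGroup V] [Module k V]
    (β : V →ₗ[k] V ⊗[k] C) (hβ : IsComodule k C β)
    (V₀ V₁ : Submodule k V) (hgr : IsGradedComodule C₀ C₁ β V₀ V₁)
    (hsimple : IsGradedSimpleSub β V₀ V₁ (⊤ : Submodule k V)) :
    (∀ f : V →ₗ[k] V, IsComodHom β β f →
        Submodule.map f V₀ ≤ V₀ → Submodule.map f V₁ ≤ V₁ →
        ∃ c : k, f = c • LinearMap.id) ∧
    ((∀ f : V →ₗ[k] V, IsComodHom β β f →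
        Submodule.map f V₀ ≤ V₁ → Submodule.map f V₁ ≤ V₀ → f = 0) ∨
      (∃ J : V →ₗ[k] V, IsComodHom β β J ∧
        Submodule.map J V₀ ≤ V₁ ∧ Submodule.map J V₁ ≤ V₀ ∧
        J ∘ₗ J = -LinearMap.id ∧
        ∀ f : V →ₗ[k] V, IsComodHom β β f →
          Submodule.map f V₀ ≤ V₁ → Submodule.map f V₁ ≤ V₀ →
            ∃ c : k, f = c • J)) ∧
    ((∃ f : V →ₗ[k] V, IsComodHom β β f ∧
        Submodule.map f V₀ ≤ V₁ ∧ Submodule.map f V₁ ≤ V₀ ∧ f ≠ 0) ↔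
      (∃ W : Submodule k V, IsSubcomodule β W ∧ W ≠ ⊥ ∧ W ≠ ⊤)) := by
  have hv := hgr.compl
  have hcc := hC.compl
  haveI : Nontrivial V := nontrivial_of_simple hsimple
  haveI : FiniteDimensional k V := finiteDimensional_of_simple hcc hβ hgr hsimple
  refine ⟨?_, ?_, ?_⟩
  · intro f hf h0 h1
    exact even_scalar hcc hgr hsimple hf h0 h1
  · by_cases hall : ∀ f : V →ₗ[k] V, IsComodHom β β f →
        Submodule.map f V₀ ≤ V₁ → Submodule.map f V₁ ≤ V₀ → f = 0
    · exact Or.inl hall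
    · right
      push_neg at hall
      obtain ⟨f, hf, h01, h10, hf0⟩ := hall
      obtain ⟨c, hc0, hcsq⟩ := odd_sq_scalar hcc hgr hsimple hf h01 h10 hf0
      obtain ⟨d, hd⟩ := IsAlgClosed.exists_pow_nat_eq (k := k) (-c⁻¹) (n := 2) (by norm_num)
      set J : V →ₗ[k] V := d • f with hJdef
      have hJ01 : Submodule.map J V₀ ≤ V₁ := by
        rintro _ ⟨v, hv0, rfl⟩
        exact V₁.smul_mem d (h01 ⟨v, hv0, rfl⟩)
      have hJ10 : Submodule.map J V₁ ≤ V₀ := by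
        rintro _ ⟨v, hv1, rfl⟩
        exact V₀.smul_mem d (h10 ⟨v, hv1, rfl⟩)
      have hJsq : J ∘ₗ J = -LinearMap.id := by
        have hdc : d * d * c = -1 := by
          rw [← pow_two, hd, neg_mul, inv_mul_cancel₀ hc0]
        rw [hJdef, LinearMap.smul_comp, LinearMap.comp_smul, hcsq, smul_smul, smul_smul, hdc,
          neg_smul, one_smul]
      refine ⟨J, isComodHom_smul hf d, hJ01, hJ10, hJsq, ?_⟩
      intro g hg hg01 hg10
      have hJg0 : Submodule.map (J ∘ₗ g) V₀ ≤ V₀ := by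
        rw [Submodule.map_comp]
        exact le_trans (Submodule.map_mono hg01) hJ10
      have hJg1 : Submodule.map (J ∘ₗ g) V₁ ≤ V₁ := by
        rw [Submodule.map_comp]
        exact le_trans (Submodule.map_mono hg10) hJ01
      obtain ⟨a, ha⟩ := even_scalar hcc hgr hsimple
        (isComodHom_comp (isComodHom_smul hf d) hg) hJg0 hJg1
      refine ⟨-a, ?_⟩
      have h1 : J ∘ₗ (J ∘ₗ g) = J ∘ₗ (a • LinearMap.id) := by rw [ha]
      rw [← LinearMap.comp_assoc, hJsq, LinearMap.neg_comp, LinearMap.id_comp,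
        LinearMap.comp_smul, LinearMap.comp_id] at h1
      rw [neg_smul, ← h1, neg_neg]
  · constructor
    · rintro ⟨f, hf, h01, h10, hf0⟩
      obtain ⟨c, hc0, hcsq⟩ := odd_sq_scalar hcc hgr hsimple hf h01 h10 hf0
      obtain ⟨r, hr⟩ := IsAlgClosed.exists_pow_nat_eq (k := k) c (n := 2) (by norm_num)
      have hrne : r ≠ 0 := by
        intro h
        rw [h] at hr
        simp at hr
        exact hc0 hr.symm
      set g : V →ₗ[k] V := f - r • LinearMap.id with hgdef
      have hghom : IsComodHom β β g := isComodHom_sub hf (isComodHom_smul isComodHom_id r)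
      have hff : ∀ v, f (f v) = c • v := fun v => by
        have := congrArg (fun (F : V →ₗ[k] V) => F v) hcsq
        simpa using this
      have hfr : ∀ v, g ((f + r • (LinearMap.id : V →ₗ[k] V)) v) = 0 := by
        intro v
        have hrr : r * r = c := by rw [← pow_two, hr]
        simp only [hgdef, LinearMap.add_apply, LinearMap.sub_apply, LinearMap.smul_apply,
          LinearMap.id_apply, map_add, map_smul, hff]
        rw [smul_sub, smul_smul, hrr]
        abel
      have hfradd : f + r • (LinearMap.id : V →ₗ[k] V) ≠ 0 := by
        intro h
        have hf' : f = (-r) • LinearMap.id := by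
          rw [neg_smul]
          exact eq_neg_of_add_eq_zero_left h
        exact hf0 (odd_eq_zero_of_scalar hv h01 h10 hf')
      refine ⟨LinearMap.ker g, ker_subcomodule hghom, ?_, ?_⟩
      · intro hbot
        have hle : LinearMap.range (f + r • (LinearMap.id : V →ₗ[k] V)) ≤ LinearMap.ker g := by
          rintro _ ⟨v, rfl⟩
          exact LinearMap.mem_ker.2 (hfr v)
        rw [hbot, le_bot_iff, LinearMap.range_eq_bot] at hle
        exact hfradd hle
      · intro htop
        have hg0 : g = 0 := LinearMap.ker_eq_top.1 htop
        rw [hgdef, sub_eq_zero] at hg0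
        exact hf0 (odd_eq_zero_of_scalar hv h01 h10 hg0)
    · rintro ⟨W, hW, hWbot, hWtop⟩
      exact exists_odd_of_reducible hcc hβ hgr hsimple hW hWbot hWtop


end SuperCoalg
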